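/- Fix m ≥ 1 and κ ∈ [0,1). For p ∈ (0,1), define Q_p(z) = (((1-p)+(p-κ)z^m)/((1-pκ)-κ(1-p)z^m))^{1/m}. Then the family {Q_p} is a commutative semigroup under composition: for all p, p' ∈ (0,1), Q_p ∘ Q_{p'} = Q_{p'} ∘ Q_p, and moreover Q_p ∘ Q_{p'} = Q_{p''} for some p'' ∈ (0,1). -/

import Mathlib

open Real

/-- The normalizing family of Example 1. -/
noncomputable def Qfam (m : ℕ) (κ p z : ℝ) : ℝ :=
  (((1 - p) + (p - κ) * z ^ m) / ((1 - p * κ) - κ * (1 - p) * z ^ m)) ^ ((m : ℝ)⁻¹)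

/-- The Möbius map underlying `Qfam`. -/
noncomputable def Mf (κ p w : ℝ) : ℝ :=
  ((1 - p) + (p - κ) * w) / ((1 - p * κ) - κ * (1 - p) * w)

lemma Mf_denom_pos {κ p w : ℝ} (hκ0 : 0 ≤ κ) (hκ1 : κ < 1) (hp1 : p < 1)
    (hw0 : 0 ≤ w) (hw1 : w ≤ 1) : 0 < (1 - p * κ) - κ * (1 - p) * w := by
  nlinarith [mul_nonneg (mul_nonneg hκ0 (by linarith : (0:ℝ) ≤ 1 - p)) (by linarith : 0 ≤ 1 - w)]

lemma Mf_num_pos {κ p w : ℝ} (hκ0 : 0 ≤ κ) (hκ1 : κ < 1) (hp1 : p < 1)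
    (hw0 : 0 ≤ w) (hw1 : w ≤ 1) : 0 < (1 - p) + (p - κ) * w := by
  nlinarith [mul_nonneg (by linarith : (0:ℝ) ≤ 1 - p) (by linarith : 0 ≤ 1 - w),
    mul_nonneg (by linarith : (0:ℝ) ≤ 1 - κ) hw0]

lemma Mf_mem {κ p w : ℝ} (hκ0 : 0 ≤ κ) (hκ1 : κ < 1) (hp0 : 0 < p) (hp1 : p < 1)
    (hw0 : 0 ≤ w) (hw1 : w ≤ 1) : Mf κ p w ∈ Set.Icc (0:ℝ) 1 := by
  have hd := Mf_denom_pos (p := p) hκ0 hκ1 hp1 hw0 hw1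
  have hn := Mf_num_pos (p := p) hκ0 hκ1 hp1 hw0 hw1
  constructor
  · exact le_of_lt (div_pos hn hd)
  · rw [Mf, div_le_one hd]
    nlinarith [mul_nonneg (mul_nonneg hp0.le (by linarith : (0:ℝ) ≤ 1 - κ)) (by linarith : 0 ≤ 1 - w)]

lemma Mf_comp {κ p q w : ℝ} (hκ0 : 0 ≤ κ) (hκ1 : κ < 1) (hp0 : 0 < p) (hp1 : p < 1)
    (hq0 : 0 < q) (hq1 : q < 1) (hw0 : 0 ≤ w) (hw1 : w ≤ 1) :
    Mf κ p (Mf κ q w) = Mf κ (p * q) w := by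
  have hdq := Mf_denom_pos (p := q) hκ0 hκ1 hq1 hw0 hw1
  obtain ⟨hM0, hM1⟩ := Mf_mem hκ0 hκ1 hq0 hq1 hw0 hw1
  have hdp := Mf_denom_pos (p := p) hκ0 hκ1 hp1 hM0 hM1
  have hdpq : 0 < (1 - p * q * κ) - κ * (1 - p * q) * w :=
    Mf_denom_pos (p := p * q) hκ0 hκ1
      (by nlinarith) hw0 hw1
  unfold Mf at *
  rw [div_eq_div_iff hdp.ne' hdpq.ne']
  have hdq' : 1 - κ * q - κ * (1 - q) * w ≠ 0 := by rw [mul_comm κ q]; exact hdq.ne'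
  field_simp
  ring

lemma Qfam_comp (m : ℕ) (hm : 1 ≤ m) {κ p q z : ℝ} (hκ0 : 0 ≤ κ) (hκ1 : κ < 1)
    (hp0 : 0 < p) (hp1 : p < 1) (hq0 : 0 < q) (hq1 : q < 1)
    (hz : z ∈ Set.Icc (0:ℝ) 1) :
    Qfam m κ p (Qfam m κ q z) = Qfam m κ (p * q) z := by
  obtain ⟨hz0, hz1⟩ := hz
  have hw0 : (0:ℝ) ≤ z ^ m := pow_nonneg hz0 m
  have hw1 : z ^ m ≤ 1 := pow_le_one₀ hz0 hz1
  obtain ⟨hM0, hM1⟩ := Mf_mem hκ0 hκ1 hq0 hq1 hw0 hw1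
  have hm0 : (m:ℝ) ≠ 0 := Nat.cast_ne_zero.mpr (by omega)
  have hpow : (Qfam m κ q z) ^ m = Mf κ q (z ^ m) := by
    show ((Mf κ q (z ^ m)) ^ ((m:ℝ)⁻¹)) ^ m = _
    rw [← Real.rpow_natCast _ m, ← Real.rpow_mul hM0, inv_mul_cancel₀ hm0, Real.rpow_one]
  have h1 : Qfam m κ p (Qfam m κ q z) = (Mf κ p (Mf κ q (z ^ m))) ^ ((m:ℝ)⁻¹) := by
    rw [Qfam, hpow]; rfl
  rw [h1, Mf_comp hκ0 hκ1 hp0 hp1 hq0 hq1 hw0 hw1]; rfl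

theorem Qfam_commutative_semigroup (m : ℕ) (hm : 1 ≤ m) (κ : ℝ)
    (hκ : κ ∈ Set.Ico (0 : ℝ) 1) (p p' : ℝ)
    (hp : p ∈ Set.Ioo (0 : ℝ) 1) (hp' : p' ∈ Set.Ioo (0 : ℝ) 1)
    (hmgt : 1 < m → p < κ ∧ p' < κ) :
    (∀ z ∈ Set.Icc (0 : ℝ) 1, Qfam m κ p (Qfam m κ p' z) = Qfam m κ p' (Qfam m κ p z)) ∧
    (∃ p'' ∈ Set.Ioo (0 : ℝ) 1,
      ∀ z ∈ Set.Icc (0 : ℝ) 1, Qfam m κ p (Qfam m κ p' z) = Qfam m κ p'' z) := by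
  obtain ⟨hκ0, hκ1⟩ := hκ
  obtain ⟨hp0, hp1⟩ := hp
  obtain ⟨hq0, hq1⟩ := hp'
  constructor
  · intro z hz
    rw [Qfam_comp m hm hκ0 hκ1 hp0 hp1 hq0 hq1 hz,
      Qfam_comp m hm hκ0 hκ1 hq0 hq1 hp0 hp1 hz, mul_comm]
  · refine ⟨p * p', ⟨mul_pos hp0 hq0, by nlinarith⟩, fun z hz => ?_⟩
    exact Qfam_comp m hm hκ0 hκ1 hp0 hp1 hq0 hq1 hz
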